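/- arXiv:2604.19068 — 3 statements merged into one kernel-verified Lean document; each statement's English description precedes it below -/
import Mathlib

section
/- Suppose $\olmu > 0$, $\olM > 0$, $\delta > 0$, $h > 0$, $m \ge 1$ an integer, $\olh = h/m$, and $p \ge 1$ an integer. If $\olh \le \left(\frac{\olmu\,\delta}{\olM\,(e^{\olmu h} - 1)}\right)^{1/p}$, then $\olM\,\olh^{p+1}\cdot\frac{e^{m\olmu\olh} - 1}{e^{\olmu\olh} - 1} \le \delta$. -/
theorem stmt2 (μ M δ h : ℝ) (m p : ℕ) (hμ : 0 < μ) (hM : 0 < M) (hδ : 0 < δ)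
    (hh : 0 < h) (hm : 1 ≤ m) (hp : 1 ≤ p) (hbar : ℝ) (hhbar : hbar = h / m)
    (hle : hbar ≤ (μ * δ / (M * (Real.exp (μ * h) - 1))) ^ ((1 : ℝ) / p)) :
    M * hbar ^ (p + 1) * ((Real.exp (m * (μ * hbar)) - 1) / (Real.exp (μ * hbar) - 1)) ≤ δ := by
  have hm0 : (0:ℝ) < m := by exact_mod_cast Nat.lt_of_lt_of_le Nat.zero_lt_one hm
  have hbpos : 0 < hbar := by rw [hhbar]; positivity
  have hmh : (m:ℝ) * hbar = h := by rw [hhbar]; field_simp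
  have hμh : 0 < μ * h := mul_pos hμ hh
  have hE : 0 < Real.exp (μ * h) - 1 := by
    have := Real.exp_lt_exp.mpr hμh; simpa using this
  have hF : μ * hbar ≤ Real.exp (μ * hbar) - 1 := by
    linarith [Real.add_one_le_exp (μ * hbar)]
  have hFpos : 0 < Real.exp (μ * hbar) - 1 :=
    lt_of_lt_of_le (mul_pos hμ hbpos) hF
  set A : ℝ := μ * δ / (M * (Real.exp (μ * h) - 1)) with hA
  have hApos : 0 < A := by positivity
  have hp0 : (p:ℝ) ≠ 0 := by exact_mod_cast Nat.cast_ne_zero.mpr (by omega)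
  have hpow : hbar ^ p ≤ A := by
    have h1 : hbar ^ (p:ℝ) ≤ (A ^ ((1:ℝ)/p)) ^ (p:ℝ) :=
      Real.rpow_le_rpow hbpos.le hle (by positivity)
    rw [← Real.rpow_natCast hbar p]
    calc hbar ^ (p:ℝ) ≤ (A ^ ((1:ℝ)/p)) ^ (p:ℝ) := h1
      _ = A := by
        rw [← Real.rpow_mul hApos.le,
          one_div_mul_cancel hp0, Real.rpow_one]
  have hME : hbar ^ p * (M * (Real.exp (μ * h) - 1)) ≤ μ * δ := by
    rw [hA] at hpow
    calc hbar ^ p * (M * (Real.exp (μ * h) - 1))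
        ≤ (μ * δ / (M * (Real.exp (μ * h) - 1))) * (M * (Real.exp (μ * h) - 1)) := by
          apply mul_le_mul_of_nonneg_right hpow; positivity
      _ = μ * δ := by field_simp
  rw [show (m:ℝ) * (μ * hbar) = μ * h by rw [← hmh]; ring]
  rw [← mul_div_assoc, div_le_iff₀ hFpos]
  calc M * hbar ^ (p+1) * (Real.exp (μ * h) - 1)
      = (hbar ^ p * (M * (Real.exp (μ * h) - 1))) * hbar := by ring
    _ ≤ (μ * δ) * hbar := by
        apply mul_le_mul_of_nonneg_right hME hbpos.le
    _ = δ * (μ * hbar) := by ring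
    _ ≤ δ * (Real.exp (μ * hbar) - 1) := by
        apply mul_le_mul_of_nonneg_left hF hδ.le
end

section
/- Let $\olmu < 0$, $\olM, \delta, h > 0$, $p \ge 1$ an integer, $m \ge 1$ an integer, and $\olh = h/m$. If $\olh \le \min\left\{\left(\frac{\olmu\,\delta}{2\olM(e^{\olmu h}-1)}\right)^{1/p},\, -\frac{1}{\olmu}\right\}$, then $\olM\,\olh^{p+1}\cdot\frac{e^{m\olmu\olh}-1}{e^{\olmu\olh}-1} \le \delta$. -/
lemma exp_le_quad (x : ℝ) (hx : x ≤ 0) : Real.exp x ≤ 1 + x + x ^ 2 / 2 := by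
  have hd : ∀ y : ℝ, HasDerivAt (fun t => 1 + t + t ^ 2 / 2 - Real.exp t)
      (1 + y - Real.exp y) y := by
    intro y
    have h1 := ((hasDerivAt_id y).const_add (1 : ℝ)).add
      ((hasDerivAt_pow 2 y).div_const 2) |>.sub (Real.hasDerivAt_exp y)
    refine h1.congr_deriv ?_
    norm_num

  have anti : Antitone (fun t : ℝ => 1 + t + t ^ 2 / 2 - Real.exp t) := by
    apply antitone_of_deriv_nonpos
    · exact fun y => ((hd y).differentiableAt)
    · intro y
      rw [(hd y).deriv]
      linarith [Real.add_one_le_exp y]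
  have h0 := anti hx
  simp only [Real.exp_zero] at h0
  norm_num at h0
  linarith

theorem stmt14 (μ M δ h : ℝ) (p m : ℕ) (hμ : μ < 0) (hM : 0 < M) (hδ : 0 < δ)
    (hh : 0 < h) (hp : 1 ≤ p) (hm : 1 ≤ m) (hbar : ℝ) (hhbar : hbar = h / m)
    (hle : hbar ≤ min ((μ * δ / (2 * M * (Real.exp (μ * h) - 1))) ^ ((1 : ℝ) / p)) (-1 / μ)) :
    M * hbar ^ (p + 1) * ((Real.exp (m * (μ * hbar)) - 1) / (Real.exp (μ * hbar) - 1)) ≤ δ := by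
  set E := Real.exp (μ * h) with hEdef
  set A := μ * δ / (2 * M * (E - 1)) with hAdef
  have hm0 : (0 : ℝ) < m := by exact_mod_cast Nat.pos_of_ne_zero (by omega)
  have hbpos : 0 < hbar := by rw [hhbar]; positivity
  have hb1 : hbar ≤ A ^ ((1 : ℝ) / p) := (le_min_iff.mp hle).1
  have hb2 : hbar ≤ -1 / μ := (le_min_iff.mp hle).2
  have hmx : (m : ℝ) * (μ * hbar) = μ * h := by
    rw [hhbar]; field_simp
  have hx : μ * hbar < 0 := mul_neg_of_neg_of_pos hμ hbpos
  have hx1 : -1 ≤ μ * hbar := by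
    have h1 := mul_le_mul_of_nonpos_left hb2 hμ.le
    have h2 : μ * (-1 / μ) = -1 := by
      rw [← mul_div_assoc, mul_neg_one, neg_div, div_self hμ.ne]
    linarith
  have hE1 : E < 1 := by
    rw [hEdef, show (1:ℝ) = Real.exp 0 by simp]
    exact Real.exp_lt_exp.mpr (by nlinarith)
  have he1 : Real.exp (μ * hbar) < 1 := by
    rw [show (1:ℝ) = Real.exp 0 by simp]
    exact Real.exp_lt_exp.mpr hx
  have hA : 0 < A := by
    rw [hAdef]
    apply div_pos_of_neg_of_neg
    · nlinarith
    · nlinarith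
  have hbp : hbar ^ p ≤ A := by
    calc hbar ^ p ≤ (A ^ ((1 : ℝ) / p)) ^ p := pow_le_pow_left₀ hbpos.le hb1 p
      _ = A := by
        rw [← Real.rpow_natCast (A ^ ((1 : ℝ) / p)) p, ← Real.rpow_mul hA.le,
          one_div, inv_mul_cancel₀ (by positivity : (p : ℝ) ≠ 0), Real.rpow_one]
  have key : -(μ * hbar) / 2 ≤ 1 - Real.exp (μ * hbar) := by
    have hq := exp_le_quad (μ * hbar) hx.le
    nlinarith
  have hdpos : 0 < -(μ * hbar) / 2 := by linarith
  rw [hmx]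
  have hrw : (E - 1) / (Real.exp (μ * hbar) - 1) = (1 - E) / (1 - Real.exp (μ * hbar)) := by
    rw [show E - 1 = -(1 - E) by ring, show Real.exp (μ * hbar) - 1 = -(1 - Real.exp (μ * hbar)) by ring,
      neg_div_neg_eq]
  rw [hrw]
  have step2 : (1 - E) / (1 - Real.exp (μ * hbar)) ≤ (1 - E) / (-(μ * hbar) / 2) := by
    gcongr
  calc M * hbar ^ (p + 1) * ((1 - E) / (1 - Real.exp (μ * hbar)))
      ≤ M * hbar ^ (p + 1) * ((1 - E) / (-(μ * hbar) / 2)) := by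
        apply mul_le_mul_of_nonneg_left step2; positivity
    _ = (2 * M * (1 - E) / (-μ)) * hbar ^ p := by
        rw [pow_succ]
        field_simp [hbpos.ne', hμ.ne]
    _ ≤ (2 * M * (1 - E) / (-μ)) * A := by
        apply mul_le_mul_of_nonneg_left hbp
        apply div_nonneg
        · nlinarith
        · linarith
    _ = δ := by
        rw [hAdef]
        have hEne : E - 1 ≠ 0 := sub_ne_zero.mpr hE1.ne
        field_simp [hμ.ne, hM.ne', hEne]
        ring
end

section
/- Let $f : \mathbb{R}^n \to \mathbb{R}^n$ be continuously differentiable, and suppose $x_1, x_2 : [0,h] \to \mathbb{R}^n$ are solutions of $x' = f(x)$ whose trajectories stay in a convex set $F$ on which the symmetric part of the Jacobian of $f$ satisfies $\langle v, J_f(q) v\rangle \le \olmu \|v\|_2^2$ for all $q \in F$ and $v \in \mathbb{R}^n$. Then for all $t \in [0,h]$, $\|x_1(t) - x_2(t)\|_2 \le \|x_1(0) - x_2(0)\|_2\, e^{\olmu t}$. -/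
open Set Real

lemma aux17 {n : ℕ} {μ : ℝ} {f : EuclideanSpace ℝ (Fin n) → EuclideanSpace ℝ (Fin n)}
    (hf : ContDiff ℝ 1 f) {F : Set (EuclideanSpace ℝ (Fin n))} (hF : Convex ℝ F)
    (hJ : ∀ q ∈ F, ∀ v : EuclideanSpace ℝ (Fin n),
      (inner ℝ v ((fderiv ℝ f q) v) : ℝ) ≤ μ * ‖v‖ ^ 2)
    {a b : EuclideanSpace ℝ (Fin n)} (ha : a ∈ F) (hb : b ∈ F) :
    (inner ℝ (a - b) (f a - f b) : ℝ) ≤ μ * ‖a - b‖ ^ 2 := by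
  set v := a - b with hv
  set φ : ℝ → ℝ := fun s => (inner ℝ v (f (b + s • v)) : ℝ) with hφ
  have hder : ∀ s : ℝ, HasDerivAt φ (inner ℝ v ((fderiv ℝ f (b + s • v)) v)) s := by
    intro s
    have h1 : HasDerivAt (fun s : ℝ => b + s • v) v s := by
      simpa using ((hasDerivAt_id s).smul_const v).const_add b
    have h2 : HasFDerivAt f (fderiv ℝ f (b + s • v)) (b + s • v) :=
      (hf.differentiable one_ne_zero (b + s • v)).hasFDerivAt
    have h3 : HasDerivAt (fun s : ℝ => f (b + s • v)) ((fderiv ℝ f (b + s • v)) v) s :=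
      h2.comp_hasDerivAt s h1
    simpa using (hasDerivAt_const s v).inner ℝ h3
  -- ψ s = μ‖v‖² s - φ s is monotone on [0,1]
  set ψ : ℝ → ℝ := fun s => μ * ‖v‖ ^ 2 * s - φ s with hψ
  have hψder : ∀ s : ℝ, HasDerivAt ψ (μ * ‖v‖ ^ 2 - inner ℝ v ((fderiv ℝ f (b + s • v)) v)) s := by
    intro s
    exact ((hasDerivAt_id s).const_mul (μ * ‖v‖ ^ 2)).sub (hder s) |>.congr_deriv (by ring)
  have hmono : MonotoneOn ψ (Icc (0:ℝ) 1) := by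
    apply monotoneOn_of_deriv_nonneg (convex_Icc 0 1)
    · exact fun s _ => (hψder s).continuousAt.continuousWithinAt
    · exact fun s _ => ((hψder s).differentiableAt).differentiableWithinAt
    · intro s hs
      rw [(hψder s).deriv]
      have hmem : b + s • v ∈ F := by
        rw [interior_Icc] at hs
        have hm := hF hb ha (by linarith [hs.2] : (0:ℝ) ≤ 1 - s) (le_of_lt hs.1) (by ring)
        convert hm using 1
        simp only [hv]
        module
      linarith [hJ _ hmem v]
  have h01 : ψ 0 ≤ ψ 1 := hmono (by norm_num) (by norm_num) zero_le_one
  have e0 : φ 0 = (inner ℝ v (f b) : ℝ) := by simp [hφ]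
  have e1 : φ 1 = (inner ℝ v (f a) : ℝ) := by simp [hφ, hv]
  simp only [hψ, e0, e1, mul_zero, mul_one, zero_sub, neg_le_sub_iff_le_add] at h01
  have : (inner ℝ v (f a - f b) : ℝ) = inner ℝ v (f a) - inner ℝ v (f b) := inner_sub_right _ _ _
  rw [hv] at this ⊢
  linarith

theorem stmt17 (n : ℕ) (h μ : ℝ) (hh : 0 < h)
    (f : EuclideanSpace ℝ (Fin n) → EuclideanSpace ℝ (Fin n)) (hf : ContDiff ℝ 1 f)
    (F : Set (EuclideanSpace ℝ (Fin n))) (hF : Convex ℝ F)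
    (x1 x2 : ℝ → EuclideanSpace ℝ (Fin n))
    (hx1 : ∀ t ∈ Set.Icc 0 h, HasDerivAt x1 (f (x1 t)) t)
    (hx2 : ∀ t ∈ Set.Icc 0 h, HasDerivAt x2 (f (x2 t)) t)
    (hx1F : ∀ t ∈ Set.Icc 0 h, x1 t ∈ F)
    (hx2F : ∀ t ∈ Set.Icc 0 h, x2 t ∈ F)
    (hJ : ∀ q ∈ F, ∀ v : EuclideanSpace ℝ (Fin n),
      (inner ℝ v ((fderiv ℝ f q) v) : ℝ) ≤ μ * ‖v‖ ^ 2) :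
    ∀ t ∈ Set.Icc 0 h, ‖x1 t - x2 t‖ ≤ ‖x1 0 - x2 0‖ * Real.exp (μ * t) := by
  intro t ht
  set y : ℝ → EuclideanSpace ℝ (Fin n) := fun s => x1 s - x2 s with hy
  have hyder : ∀ s ∈ Icc 0 h, HasDerivAt y (f (x1 s) - f (x2 s)) s :=
    fun s hs => (hx1 s hs).sub (hx2 s hs)
  set g : ℝ → ℝ := fun s => (inner ℝ (y s) (y s) : ℝ) with hg
  have hgder : ∀ s ∈ Icc 0 h,
      HasDerivAt g (2 * (inner ℝ (y s) (f (x1 s) - f (x2 s)) : ℝ)) s := by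
    intro s hs
    have := (hyder s hs).inner ℝ (hyder s hs)
    refine this.congr_deriv ?_
    rw [real_inner_comm]; ring
  set G : ℝ → ℝ := fun s => g s * Real.exp (-(2 * μ) * s) with hG
  have hexp : ∀ s : ℝ, HasDerivAt (fun s => Real.exp (-(2 * μ) * s))
      (Real.exp (-(2 * μ) * s) * (-(2 * μ))) s := by
    intro s
    have h1 : HasDerivAt (fun s : ℝ => -(2 * μ) * s) (-(2 * μ)) s := by
      simpa using (hasDerivAt_id s).const_mul (-(2 * μ))
    exact h1.exp.congr_deriv (by ring)
  have hGder : ∀ s ∈ Icc 0 h, HasDerivAt G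
      ((2 * (inner ℝ (y s) (f (x1 s) - f (x2 s)) : ℝ) - 2 * μ * g s) * Real.exp (-(2 * μ) * s)) s := by
    intro s hs
    exact ((hgder s hs).mul (hexp s)).congr_deriv (by ring)
  have hanti : AntitoneOn G (Icc 0 h) := by
    apply antitoneOn_of_deriv_nonpos (convex_Icc 0 h)
    · exact fun s hs => ((hGder s hs).continuousAt).continuousWithinAt
    · intro s hs
      rw [interior_Icc] at hs
      exact ((hGder s (Ioo_subset_Icc_self hs)).differentiableAt).differentiableWithinAt
    · intro s hs
      rw [interior_Icc] at hs
      have hs' := Ioo_subset_Icc_self hs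
      rw [(hGder s hs').deriv]
      have key : (inner ℝ (y s) (f (x1 s) - f (x2 s)) : ℝ) ≤ μ * ‖y s‖ ^ 2 :=
        aux17 hf hF hJ (hx1F s hs') (hx2F s hs')
      have hgs : g s = ‖y s‖ ^ 2 := real_inner_self_eq_norm_sq _
      have hpos : 0 < Real.exp (-(2 * μ) * s) := Real.exp_pos _
      apply mul_nonpos_of_nonpos_of_nonneg _ hpos.le
      rw [hgs]; linarith
  have h0 : (0:ℝ) ∈ Icc 0 h := ⟨le_rfl, hh.le⟩
  have hGt : G t ≤ G 0 := hanti h0 ht ht.1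
  have hG0 : G 0 = ‖y 0‖ ^ 2 := by
    show g 0 * Real.exp (-(2 * μ) * 0) = _
    rw [mul_zero, Real.exp_zero, mul_one]
    exact real_inner_self_eq_norm_sq _
  have hGt' : G t = ‖y t‖ ^ 2 * Real.exp (-(2 * μ) * t) := by
    show g t * _ = _
    rw [show g t = ‖y t‖ ^ 2 from real_inner_self_eq_norm_sq _]
  have hsq : ‖y t‖ ^ 2 ≤ (‖y 0‖ * Real.exp (μ * t)) ^ 2 := by
    rw [hGt', hG0] at hGt
    have he : Real.exp (-(2 * μ) * t) = (Real.exp (μ * t))⁻¹ ^ 2 := by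
      rw [← Real.exp_neg, sq, ← Real.exp_add]
      ring_nf
    have hpos : (0:ℝ) < Real.exp (μ * t) := Real.exp_pos _
    rw [he] at hGt
    rw [mul_pow]
    calc ‖y t‖ ^ 2 = ‖y t‖ ^ 2 * (Real.exp (μ * t))⁻¹ ^ 2 * Real.exp (μ * t) ^ 2 := by
          field_simp
      _ ≤ ‖y 0‖ ^ 2 * Real.exp (μ * t) ^ 2 := by
          apply mul_le_mul_of_nonneg_right hGt (by positivity)
  have hnn : 0 ≤ ‖y 0‖ * Real.exp (μ * t) := by positivity
  have hs2 := Real.sqrt_le_sqrt hsq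
  rwa [Real.sqrt_sq (norm_nonneg _), Real.sqrt_sq hnn] at hs2
end
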